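/- Let Λ ⊂ the closed upper half-plane be interpolating for the Paley–Wiener space L²_{πτ}, let Σ ⊂ ℂ be interpolating for L²_{πτ}, and suppose Λ is complete interpolating for the annihilator L²_{πτ}[Σ] = {f ∈ L²_{πτ} : f|_Σ = 0}. Then Λ ∪ Σ is complete interpolating for L²_{πτ}. -/

import Mathlib

open MeasureTheory

/-- Membership in the classical Paley–Wiener space `L²_{πτ}`: entire, of exponential
type at most `πτ`, and square integrable on the real axis. -/
def IsPW (τ : ℝ) (f : ℂ → ℂ) : Prop :=
  Differentiable ℂ f ∧
  (∀ ε > (0 : ℝ), ∃ Cε : ℝ, ∀ z : ℂ,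
    ‖f z‖ ≤ Cε * Real.exp ((Real.pi * τ + ε) * ‖z‖)) ∧
  MeasureTheory.Integrable (fun x : ℝ => ‖f (x : ℂ)‖ ^ 2)

/-- Admissible interpolation data on `Γ`. -/
def IsL2Data (Γ : Set ℂ) (c : Γ → ℂ) : Prop :=
  Summable (fun γ : Γ => ‖c γ‖ ^ 2 * (1 + |(γ : ℂ).im|))

/-- `Γ` is interpolating for `L²_{πτ}`. -/
def IsInterpolating (τ : ℝ) (Γ : Set ℂ) : Prop :=
  ∀ c : Γ → ℂ, IsL2Data Γ c → ∃ f : ℂ → ℂ, IsPW τ f ∧ ∀ γ : Γ, f γ = c γ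

lemma IsPW.add' {τ : ℝ} {f g : ℂ → ℂ} (hf : IsPW τ f) (hg : IsPW τ g) :
    IsPW τ (fun z => f z + g z) := by
  obtain ⟨hf1, hf2, hf3⟩ := hf
  obtain ⟨hg1, hg2, hg3⟩ := hg
  refine ⟨hf1.add hg1, ?_, ?_⟩
  · intro ε hε
    obtain ⟨C1, h1⟩ := hf2 ε hε
    obtain ⟨C2, h2⟩ := hg2 ε hε
    refine ⟨C1 + C2, fun z => ?_⟩
    calc ‖f z + g z‖ ≤ ‖f z‖ + ‖g z‖ :=
          norm_add_le _ _
      _ ≤ (C1 + C2) * Real.exp ((Real.pi * τ + ε) * ‖z‖) := by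
          rw [add_mul]; exact add_le_add (h1 z) (h2 z)
  · have hcont : Continuous fun x : ℝ => ‖f x + g x‖ ^ 2 := by
      have : Continuous fun x : ℝ => f x + g x :=
        ((hf1.continuous.add hg1.continuous)).comp Complex.continuous_ofReal
      exact (continuous_norm.comp this).pow 2
    refine ((hf3.add hg3).const_mul 2).mono' hcont.aestronglyMeasurable ?_
    filter_upwards with x
    have h1 : ‖f x + g x‖ ≤ ‖f x‖ + ‖g x‖ :=
      norm_add_le _ _
    have h2 : (0:ℝ) ≤ ‖f x‖ := norm_nonneg _
    have h3 : (0:ℝ) ≤ ‖g x‖ := norm_nonneg _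
    rw [Real.norm_eq_abs, abs_of_nonneg (by positivity)]
    simp only [Pi.add_apply]
    nlinarith [sq_nonneg (‖f x‖ - ‖g x‖),
      norm_nonneg (f x + g x)]

lemma IsPW.sub' {τ : ℝ} {f g : ℂ → ℂ} (hf : IsPW τ f) (hg : IsPW τ g) :
    IsPW τ (fun z => f z - g z) := by
  obtain ⟨hf1, hf2, hf3⟩ := hf
  obtain ⟨hg1, hg2, hg3⟩ := hg
  refine ⟨hf1.sub hg1, ?_, ?_⟩
  · intro ε hε
    obtain ⟨C1, h1⟩ := hf2 ε hε
    obtain ⟨C2, h2⟩ := hg2 ε hε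
    refine ⟨C1 + C2, fun z => ?_⟩
    calc ‖f z - g z‖ ≤ ‖f z‖ + ‖g z‖ := by
          exact norm_sub_le _ _
      _ ≤ (C1 + C2) * Real.exp ((Real.pi * τ + ε) * ‖z‖) := by
          rw [add_mul]; exact add_le_add (h1 z) (h2 z)
  · have hcont : Continuous fun x : ℝ => ‖f x - g x‖ ^ 2 := by
      have : Continuous fun x : ℝ => f x - g x :=
        ((hf1.continuous.sub hg1.continuous)).comp Complex.continuous_ofReal
      exact (continuous_norm.comp this).pow 2
    refine ((hf3.add hg3).const_mul 2).mono' hcont.aestronglyMeasurable ?_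
    filter_upwards with x
    have h1 : ‖f x - g x‖ ≤ ‖f x‖ + ‖g x‖ := by
      exact norm_sub_le _ _
    have h2 : (0:ℝ) ≤ ‖f x‖ := norm_nonneg _
    have h3 : (0:ℝ) ≤ ‖g x‖ := norm_nonneg _
    rw [Real.norm_eq_abs, abs_of_nonneg (by positivity)]
    simp only [Pi.add_apply]
    nlinarith [sq_nonneg (‖f x‖ - ‖g x‖),
      norm_nonneg (f x - g x)]

lemma IsPW.zero' (τ : ℝ) : IsPW τ (fun _ => (0:ℂ)) := by
  refine ⟨differentiable_const 0, fun ε hε => ⟨0, fun z => by simp⟩, ?_⟩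
  simpa using (integrable_const (0:ℝ)).congr (by filter_upwards with x; simp)

theorem stmt19 (τ : ℝ) (hτ : 0 < τ) (Λ S : Set ℂ)
    (hΛup : ∀ l ∈ Λ, 0 ≤ l.im)
    (hΛ : IsInterpolating τ Λ) (hS : IsInterpolating τ S)
    (hPP : ∀ Γ : Set ℂ, IsInterpolating τ Γ →
      ∀ f : ℂ → ℂ, IsPW τ f → IsL2Data Γ (fun γ : Γ => f γ))
    (hcomp : ∀ c : Λ → ℂ, IsL2Data Λ c →
      ∃! f : ℂ → ℂ, (IsPW τ f ∧ ∀ s ∈ S, f s = 0) ∧ ∀ γ : Λ, f γ = c γ) :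
    ∀ c : ↥(Λ ∪ S) → ℂ, IsL2Data (Λ ∪ S) c →
      ∃! f : ℂ → ℂ, IsPW τ f ∧ ∀ γ : ↥(Λ ∪ S), f γ = c γ := by
  intro c hc
  -- restrict the data to S
  have hinjS : Function.Injective (fun s : S => (⟨s, Or.inr s.2⟩ : ↥(Λ ∪ S))) := by
    intro a b h
    simp only [Subtype.mk.injEq] at h
    exact Subtype.ext (Subtype.mk.inj h)
  have hcS : IsL2Data S (fun s : S => c ⟨s, Or.inr s.2⟩) :=
    hc.comp_injective hinjS
  obtain ⟨g, hgPW, hgint⟩ := hS _ hcS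
  -- data on Λ for the correction
  have hinjΛ : Function.Injective (fun l : Λ => (⟨l, Or.inl l.2⟩ : ↥(Λ ∪ S))) := by
    intro a b h
    simp only [Subtype.mk.injEq] at h
    exact Subtype.ext (Subtype.mk.inj h)
  have hcΛ : IsL2Data Λ (fun l : Λ => c ⟨l, Or.inl l.2⟩) :=
    hc.comp_injective hinjΛ
  have hgΛ : IsL2Data Λ (fun l : Λ => g l) := hPP Λ hΛ g hgPW
  have hd : IsL2Data Λ (fun l : Λ => c ⟨l, Or.inl l.2⟩ - g l) := by
    refine Summable.of_nonneg_of_le (fun l => by positivity)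
      (fun l => ?_) (((hcΛ.mul_left 2).add (hgΛ.mul_left 2)))
    have h1 : ‖c ⟨l, Or.inl l.2⟩ - g l‖ ≤
        ‖c ⟨l, Or.inl l.2⟩‖ + ‖g l‖ := by
      exact norm_sub_le _ _
    have h2 : (0:ℝ) ≤ ‖c ⟨l, Or.inl l.2⟩‖ := norm_nonneg _
    have h3 : (0:ℝ) ≤ ‖g l‖ := norm_nonneg _
    have h4 : (0:ℝ) ≤ |(l:ℂ).im| := abs_nonneg _
    have key : ‖c ⟨l, Or.inl l.2⟩ - g l‖ ^ 2 ≤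
        2 * ‖c ⟨l, Or.inl l.2⟩‖ ^ 2 + 2 * ‖g l‖ ^ 2 := by
      nlinarith [sq_nonneg (‖c ⟨l, Or.inl l.2⟩‖ - ‖g l‖),
        norm_nonneg (c ⟨l, Or.inl l.2⟩ - g (l:ℂ))]
    have hw : (0:ℝ) < 1 + |(l:ℂ).im| := by linarith
    calc ‖c ⟨l, Or.inl l.2⟩ - g l‖ ^ 2 * (1 + |(l:ℂ).im|)
        ≤ (2 * ‖c ⟨l, Or.inl l.2⟩‖ ^ 2 + 2 * ‖g l‖ ^ 2)
            * (1 + |(l:ℂ).im|) := by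
          exact mul_le_mul_of_nonneg_right key hw.le
      _ = 2 * (‖c ⟨l, Or.inl l.2⟩‖ ^ 2 * (1 + |(l:ℂ).im|))
          + 2 * (‖g l‖ ^ 2 * (1 + |(l:ℂ).im|)) := by ring
  obtain ⟨h, ⟨⟨hhPW, hhS⟩, hhΛ⟩, huniq⟩ := hcomp _ hd
  refine ⟨fun z => g z + h z, ⟨hgPW.add' hhPW, ?_⟩, ?_⟩
  · rintro ⟨γ, hγ | hγ⟩
    · have hh := hhΛ ⟨γ, hγ⟩
      show g γ + h γ = c ⟨γ, Or.inl hγ⟩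
      simp only at hh
      rw [hh]; ring
    · have h0 := hhS γ hγ
      have hg0 := hgint ⟨γ, hγ⟩
      simp only at h0 hg0 ⊢
      rw [h0, hg0, add_zero]
  · rintro f' ⟨hf'PW, hf'int⟩
    -- f' - (g + h) vanishes on Λ ∪ S and is PW; use uniqueness for zero data on Λ
    have hzero : IsL2Data Λ (fun _ : Λ => (0:ℂ)) := by
      unfold IsL2Data; simpa using summable_zero
    obtain ⟨u, hu, huu⟩ := hcomp _ hzero
    have hD : IsPW τ (fun z => f' z - (g z + h z)) := hf'PW.sub' (hgPW.add' hhPW)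
    have hDS : ∀ s ∈ S, f' s - (g s + h s) = 0 := by
      intro s hs
      have h1 := hf'int ⟨s, Or.inr hs⟩
      have h2 := hgint ⟨s, hs⟩
      have h3 := hhS s hs
      simp only at h1 h2 h3
      rw [h1, h2, h3, add_zero, sub_self]
    have hDΛ : ∀ l : Λ, f' l - (g l + h l) = (0:ℂ) := by
      intro l
      have h1 := hf'int ⟨l, Or.inl l.2⟩
      have h2 := hhΛ l
      simp only at h1 h2
      rw [h1, h2]; ring
    have e1 : (fun z => f' z - (g z + h z)) = u :=
      huu _ ⟨⟨hD, hDS⟩, hDΛ⟩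
    have e2 : (fun _ : ℂ => (0:ℂ)) = u :=
      huu _ ⟨⟨IsPW.zero' τ, fun s _ => rfl⟩, fun l => rfl⟩
    funext z
    have := congrFun (e1.trans e2.symm) z
    linear_combination this
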